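/- arXiv:2510.02273 — 2 statements merged into one kernel-verified Lean document; each statement's English description precedes it below -/
import Mathlib

section
/- Let h : ℚ_p → ℂ be given by h(x) = |x|_p^{λ-1} · φ(x) where λ > 1 and φ is a locally constant function whose support is contained in a compact open subset of ℚ_p. Then the Fourier transform ĥ(y) = ∫_{ℚ_p} h(x) ψ(xy) dx (for a nontrivial additive character ψ of ℚ_p) satisfies ĥ(y) = O(|y|_p^{-λ}) as |y|_p → ∞. -/
open MeasureTheory Filter Asymptotics Metric ENNReal

section Aux

variable {p : ℕ} [hp : Fact p.Prime]

/-- Uniform local constancy for a locally constant function with compact support. -/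
lemma padic_unif_loc_const (φ : ℚ_[p] → ℂ) (hφ : IsLocallyConstant φ)
    (hK : IsCompact (tsupport φ)) :
    ∃ δ : ℝ, 0 < δ ∧ ∀ x u : ℚ_[p], ‖u‖ ≤ δ → φ (x + u) = φ x := by
  obtain ⟨δ, hδ, hcov⟩ := lebesgue_number_lemma_of_metric (s := tsupport φ)
      (c := fun z : ℚ_[p] => φ ⁻¹' {φ z}) hK (fun z => hφ {φ z})
      (fun x _ => Set.mem_iUnion.2 ⟨x, rfl⟩)
  refine ⟨δ / 2, by positivity, fun x u hu => ?_⟩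
  have key : ∀ a b : ℚ_[p], a ∈ tsupport φ → ‖b - a‖ ≤ δ / 2 → φ b = φ a := by
    intro a b ha hab
    obtain ⟨z, hz⟩ := hcov a ha
    have h1 : a ∈ ball a δ := by simp [hδ]
    have h2 : b ∈ ball a δ := by
      rw [mem_ball, dist_eq_norm]
      linarith
    have e1 := hz h1
    have e2 := hz h2
    simp only [Set.mem_preimage, Set.mem_singleton_iff] at e1 e2
    rw [e1, e2]
  by_cases hx : x ∈ tsupport φ
  · have := key x (x + u) hx (by simpa using hu)
    exact this
  · by_cases hxu : x + u ∈ tsupport φ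
    · have := key (x + u) x hxu (by simpa [neg_sub] using (norm_neg u ▸ (by simpa using hu : ‖u‖ ≤ δ / 2)))
      exact this.symm
    · rw [image_eq_zero_of_notMem_tsupport hx, image_eq_zero_of_notMem_tsupport hxu]

/-- Coset decomposition of a closed ball in `ℚ_p`. -/
lemma padic_ball_cosets (n : ℤ) :
    closedBall (0 : ℚ_[p]) ((p : ℝ) ^ (-n)) =
      ⋃ i ∈ Finset.range p, closedBall ((i : ℚ_[p]) * (p : ℚ_[p]) ^ n) ((p : ℝ) ^ (-(n + 1))) := by
  have hp1 : (1 : ℝ) < p := by exact_mod_cast hp.out.one_lt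
  have hp0 : (0 : ℝ) < p := by positivity
  have hpne : (p : ℚ_[p]) ≠ 0 := Nat.cast_ne_zero.mpr hp.out.ne_zero
  ext x
  simp only [Set.mem_iUnion, mem_closedBall, dist_eq_norm, sub_zero, dist_zero_right]
  constructor
  · intro hx
    have hz1 : ‖x * (p : ℚ_[p]) ^ (-n)‖ ≤ 1 := by
      rw [norm_mul, Padic.norm_p_zpow, neg_neg]
      calc ‖x‖ * (p : ℝ) ^ n ≤ (p : ℝ) ^ (-n) * (p : ℝ) ^ n := by
            exact mul_le_mul_of_nonneg_right hx (by positivity)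
        _ = 1 := by rw [← zpow_add₀ (ne_of_gt hp0)]; simp
    set z : ℤ_[p] := ⟨x * (p : ℚ_[p]) ^ (-n), hz1⟩ with hzdef
    refine ⟨z.appr 1, Finset.mem_range.mpr (by simpa using z.appr_lt 1), ?_⟩
    have hspan : z - ((z.appr 1 : ℕ) : ℤ_[p]) ∈ Ideal.span {(p : ℤ_[p]) ^ 1} := z.appr_spec 1
    have hznorm : ‖z - ((z.appr 1 : ℕ) : ℤ_[p])‖ ≤ (p : ℝ) ^ (-(1 : ℤ)) := by
      have := (PadicInt.norm_le_pow_iff_mem_span_pow (z - ((z.appr 1 : ℕ) : ℤ_[p])) 1).mpr hspan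
      simpa using this
    have hzq : (z : ℚ_[p]) = x * (p : ℚ_[p]) ^ (-n) := rfl
    have hxz : x - ((z.appr 1 : ℕ) : ℚ_[p]) * (p : ℚ_[p]) ^ n
        = ((z - ((z.appr 1 : ℕ) : ℤ_[p]) : ℤ_[p]) : ℚ_[p]) * (p : ℚ_[p]) ^ n := by
      push_cast
      rw [sub_mul, mul_assoc, ← zpow_add₀ hpne]
      simp
    rw [hxz, norm_mul, Padic.norm_p_zpow]
    have hq : ‖((z - ((z.appr 1 : ℕ) : ℤ_[p]) : ℤ_[p]) : ℚ_[p])‖ ≤ (p : ℝ)⁻¹ := by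
      rw [PadicInt.padic_norm_e_of_padicInt]
      simpa using hznorm
    calc ‖((z - ((z.appr 1 : ℕ) : ℤ_[p]) : ℤ_[p]) : ℚ_[p])‖ * (p : ℝ) ^ (-n)
        ≤ (p : ℝ)⁻¹ * (p : ℝ) ^ (-n) := by
          exact mul_le_mul_of_nonneg_right hq (by positivity)
      _ = (p : ℝ) ^ (-(n + 1)) := by
          rw [← zpow_neg_one, ← zpow_add₀ (ne_of_gt hp0)]
          ring_nf
  · rintro ⟨i, hi, hx⟩
    have hile : ‖(i : ℚ_[p]) * (p : ℚ_[p]) ^ n‖ ≤ (p : ℝ) ^ (-n) := by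
      rw [norm_mul, Padic.norm_p_zpow]
      have h1 : ‖(i : ℚ_[p])‖ ≤ 1 := by
        have := Padic.norm_int_le_one (p := p) (i : ℤ)
        simpa using this
      calc ‖(i : ℚ_[p])‖ * (p : ℝ) ^ (-n) ≤ 1 * (p : ℝ) ^ (-n) := by
            exact mul_le_mul_of_nonneg_right h1 (by positivity)
        _ = (p : ℝ) ^ (-n) := one_mul _
    have h2 : (p : ℝ) ^ (-(n + 1)) ≤ (p : ℝ) ^ (-n) :=
      zpow_le_zpow_right₀ (le_of_lt hp1) (by omega)
    have : x = (x - (i : ℚ_[p]) * (p : ℚ_[p]) ^ n) + (i : ℚ_[p]) * (p : ℚ_[p]) ^ n := by ring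
    rw [this]
    exact le_trans (Padic.nonarchimedean _ _) (max_le (le_trans hx h2) hile)

/-- Distinct cosets are disjoint. -/
lemma padic_coset_disj (n : ℤ) {i j : ℕ} (hi : i < p) (hj : j < p) (hne : i ≠ j) :
    Disjoint (closedBall ((i : ℚ_[p]) * (p : ℚ_[p]) ^ n) ((p : ℝ) ^ (-(n + 1))))
      (closedBall ((j : ℚ_[p]) * (p : ℚ_[p]) ^ n) ((p : ℝ) ^ (-(n + 1)))) := by
  have hp1 : (1 : ℝ) < p := by exact_mod_cast hp.out.one_lt
  rcases IsUltrametricDist.closedBall_eq_or_disjoint ((i : ℚ_[p]) * (p : ℚ_[p]) ^ n)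
      ((j : ℚ_[p]) * (p : ℚ_[p]) ^ n) ((p : ℝ) ^ (-(n + 1))) with heq | hd
  · exfalso
    have hmem : (j : ℚ_[p]) * (p : ℚ_[p]) ^ n
        ∈ closedBall ((i : ℚ_[p]) * (p : ℚ_[p]) ^ n) ((p : ℝ) ^ (-(n + 1))) := by
      rw [heq]; exact mem_closedBall_self (by positivity)
    rw [mem_closedBall, dist_eq_norm] at hmem
    have hre : (j : ℚ_[p]) * (p : ℚ_[p]) ^ n - (i : ℚ_[p]) * (p : ℚ_[p]) ^ n
        = (((j : ℤ) - i : ℤ) : ℚ_[p]) * (p : ℚ_[p]) ^ n := by push_cast; ring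
    rw [hre, norm_mul, Padic.norm_p_zpow] at hmem
    have hnorm1 : ‖(((j : ℤ) - i : ℤ) : ℚ_[p])‖ = 1 := by
      refine le_antisymm (Padic.norm_int_le_one _) ?_
      by_contra hlt
      push_neg at hlt
      have hdvd : (p : ℤ) ∣ ((j : ℤ) - i) := Padic.norm_intCast_lt_one_iff.mp hlt
      have hne' : ((j : ℤ) - i) ≠ 0 := sub_ne_zero.mpr (by exact_mod_cast hne.symm)
      have hle : (p : ℤ) ≤ |(j : ℤ) - i| :=
        Int.le_of_dvd (abs_pos.mpr hne') ((dvd_abs _ _).mpr hdvd)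
      have hablt : |(j : ℤ) - i| < p := by
        rw [abs_lt]
        constructor
        · have : (i : ℤ) < p := by exact_mod_cast hi
          omega
        · have : (j : ℤ) < p := by exact_mod_cast hj
          omega
      omega
    rw [hnorm1, one_mul] at hmem
    have hlt2 : (p : ℝ) ^ (-(n + 1)) < (p : ℝ) ^ (-n) := zpow_lt_zpow_right₀ hp1 (by omega)
    linarith
  · exact hd

/-- Measure of small balls under a Haar measure on `ℚ_p`. -/
lemma padic_meas_ball [MeasurableSpace ℚ_[p]] [BorelSpace ℚ_[p]]
    (μ : Measure ℚ_[p]) [μ.IsAddHaarMeasure] (n : ℕ) :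
    μ (closedBall (0 : ℚ_[p]) ((p : ℝ) ^ (-(n : ℤ)))) * (p : ℝ≥0∞) ^ n
      = μ (closedBall 0 1) := by
  induction n with
  | zero => simp
  | succ n ih =>
    have hstep : μ (closedBall (0 : ℚ_[p]) ((p : ℝ) ^ (-(n : ℤ))))
        = (p : ℝ≥0∞) * μ (closedBall (0 : ℚ_[p]) ((p : ℝ) ^ (-((n : ℤ) + 1)))) := by
      have hdisj : (↑(Finset.range p) : Set ℕ).PairwiseDisjoint
          (fun i : ℕ => closedBall ((i : ℚ_[p]) * (p : ℚ_[p]) ^ (n : ℤ))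
            ((p : ℝ) ^ (-((n : ℤ) + 1)))) := by
        intro i hi j hj hne
        exact padic_coset_disj (n : ℤ) (Finset.mem_range.mp hi) (Finset.mem_range.mp hj) hne
      rw [padic_ball_cosets (n : ℤ)]
      rw [measure_biUnion_finset hdisj (fun b _ => measurableSet_closedBall)]
      have hc : ∀ i ∈ Finset.range p,
          μ (closedBall ((i : ℚ_[p]) * (p : ℚ_[p]) ^ (n : ℤ)) ((p : ℝ) ^ (-((n : ℤ) + 1))))
            = μ (closedBall (0 : ℚ_[p]) ((p : ℝ) ^ (-((n : ℤ) + 1)))) := fun i _ =>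
        Measure.addHaar_closedBall_center μ _ _
      rw [Finset.sum_congr rfl hc, Finset.sum_const, Finset.card_range, nsmul_eq_mul]
    have hcast : (-((n + 1 : ℕ) : ℤ)) = -((n : ℤ) + 1) := by push_cast; ring
    rw [hcast, pow_succ]
    calc μ (closedBall (0 : ℚ_[p]) ((p : ℝ) ^ (-((n : ℤ) + 1)))) * ((p : ℝ≥0∞) ^ n * p)
        = ((p : ℝ≥0∞) * μ (closedBall (0 : ℚ_[p]) ((p : ℝ) ^ (-((n : ℤ) + 1))))) * (p : ℝ≥0∞) ^ n := by
          ring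
      _ = μ (closedBall (0 : ℚ_[p]) ((p : ℝ) ^ (-(n : ℤ)))) * (p : ℝ≥0∞) ^ n := by rw [← hstep]
      _ = μ (closedBall 0 1) := ih

end Aux

/-- let `h(x) = |x|_p^{λ-1} φ(x)` on `ℚ_p` with `λ > 1` and `φ` locally
constant with support contained in a compact open set. Then for a nontrivial continuous
additive character `ψ` of `ℚ_p` and a Haar measure `μ`, the Fourier transform
`ĥ(y) = ∫ h(x) ψ(xy) dμ(x)` is `O(|y|_p^{-λ})` as `|y|_p → ∞`. -/
theorem fourier_decay_padic (p : ℕ) [Fact p.Prime]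
    [MeasurableSpace ℚ_[p]] [BorelSpace ℚ_[p]]
    (μ : Measure ℚ_[p]) [μ.IsAddHaarMeasure]
    (ψ : AddChar ℚ_[p] ℂ) (hψc : Continuous ψ) (hψ : ψ ≠ 1)
    (φ : ℚ_[p] → ℂ) (hφ : IsLocallyConstant φ)
    (hsupp : ∃ Ω : Set ℚ_[p], IsCompact Ω ∧ IsOpen Ω ∧ Function.support φ ⊆ Ω)
    (lam : ℝ) (hlam : 1 < lam)
    (h : ℚ_[p] → ℂ) (hh : ∀ x : ℚ_[p], h x = ((‖x‖ ^ (lam - 1) : ℝ) : ℂ) * φ x) :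
    ∃ C R : ℝ, ∀ y : ℚ_[p], R ≤ ‖y‖ →
      ‖∫ x : ℚ_[p], h x * ψ (x * y) ∂μ‖ ≤ C * ‖y‖ ^ (-lam) := by
  classical
  have hp1 : (1 : ℝ) < p := by exact_mod_cast (Fact.out : p.Prime).one_lt
  have hp0 : (0 : ℝ) < p := by positivity
  obtain ⟨Ω, hΩc, hΩo, hΩs⟩ := hsupp
  have hφcont : Continuous φ := hφ.continuous
  have htsupp : tsupport φ ⊆ Ω := closure_minimal hΩs hΩc.isClosed
  have hcs : HasCompactSupport φ := IsCompact.of_isClosed_subset hΩc isClosed_closure htsupp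
  obtain ⟨δ, hδpos, hδ⟩ := padic_unif_loc_const φ hφ hcs
  -- pick m with p^(-m) ≤ δ
  obtain ⟨m, hm'⟩ : ∃ m : ℕ, ((p : ℝ)⁻¹) ^ m < δ :=
    exists_pow_lt_of_lt_one hδpos (by rw [inv_lt_one₀ hp0]; exact hp1)
  have hm : (p : ℝ) ^ (-(m : ℤ)) ≤ δ := by
    rw [zpow_neg, zpow_natCast, ← inv_pow]
    exact le_of_lt hm'
  -- nontriviality witness
  obtain ⟨c0, hc0⟩ := AddChar.ne_one_iff.mp hψ
  have hc0ne : c0 ≠ 0 := by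
    intro hz
    rw [hz, AddChar.map_zero_eq_one] at hc0
    exact hc0 rfl
  have hc0pos : 0 < ‖c0‖ := norm_pos_iff.mpr hc0ne
  -- bound for φ
  obtain ⟨Mφ, hMφ⟩ := hcs.exists_bound_of_continuous hφcont
  have hMφ0 : 0 ≤ Mφ := le_trans (norm_nonneg _) (hMφ 0)
  -- bound for ψ on a fixed compact set
  obtain ⟨Mψ, hMψ⟩ := (isCompact_closedBall (0 : ℚ_[p]) ‖c0‖).exists_bound_of_continuousOn
    hψc.continuousOn
  have hMψ0 : 0 ≤ Mψ := le_trans (norm_nonneg _) (hMψ 0 (mem_closedBall_self hc0pos.le))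
  -- bound for the support
  obtain ⟨T', hT'⟩ := hΩc.isBounded.subset_closedBall 0
  set T : ℝ := max T' 1 with hTdef
  have hΩT : Ω ⊆ closedBall 0 T := hT'.trans (closedBall_subset_closedBall (le_max_left _ _))
  set M0 : ℝ := (μ (closedBall (0 : ℚ_[p]) 1)).toReal with hM0def
  have hM00 : 0 ≤ M0 := ENNReal.toReal_nonneg
  refine ⟨Mφ * Mψ * M0 * ‖c0‖ ^ lam, ‖c0‖ * (p : ℝ) ^ m, fun y hy => ?_⟩
  have hy0 : 0 < ‖y‖ := lt_of_lt_of_le (by positivity) hy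
  have hyne : y ≠ 0 := norm_pos_iff.mp hy0
  set r : ℝ := ‖c0‖ / ‖y‖ with hrdef
  have hrpos : 0 < r := div_pos hc0pos hy0
  have hr_le : r ≤ (p : ℝ) ^ (-(m : ℤ)) := by
    rw [hrdef, div_le_iff₀ hy0]
    have h1 : (p : ℝ) ^ (-(m : ℤ)) * (‖c0‖ * (p : ℝ) ^ m) ≤ (p : ℝ) ^ (-(m : ℤ)) * ‖y‖ :=
      mul_le_mul_of_nonneg_left hy (by positivity)
    calc ‖c0‖ = (p : ℝ) ^ (-(m : ℤ)) * (‖c0‖ * (p : ℝ) ^ m) := by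
          rw [zpow_neg, zpow_natCast]
          field_simp
      _ ≤ (p : ℝ) ^ (-(m : ℤ)) * ‖y‖ := h1
  have hrδ : r ≤ δ := hr_le.trans hm
  have hr1 : r ≤ 1 := by
    refine hr_le.trans ?_
    calc (p : ℝ) ^ (-(m : ℤ)) ≤ (p : ℝ) ^ (0 : ℤ) :=
          zpow_le_zpow_right₀ hp1.le (by omega)
      _ = 1 := zpow_zero _
  have hrymul : r * ‖y‖ = ‖c0‖ := div_mul_cancel₀ _ (ne_of_gt hy0)
  -- r is a power of p
  obtain ⟨n, hrn⟩ : ∃ n : ℕ, r = (p : ℝ) ^ (-(n : ℤ)) := by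
    have h1 : ‖c0‖ = (p : ℝ) ^ (-c0.valuation) := Padic.norm_eq_zpow_neg_valuation hc0ne
    have h2 : ‖y‖ = (p : ℝ) ^ (-y.valuation) := Padic.norm_eq_zpow_neg_valuation hyne
    have h3 : r = (p : ℝ) ^ (-(c0.valuation - y.valuation)) := by
      rw [hrdef, h1, h2, ← zpow_sub₀ (ne_of_gt hp0)]
      ring_nf
    have h4 : (0 : ℤ) ≤ c0.valuation - y.valuation := by
      by_contra hneg
      push_neg at hneg
      have : (1 : ℝ) < (p : ℝ) ^ (-(c0.valuation - y.valuation)) := by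
        calc (1 : ℝ) = (p : ℝ) ^ (0 : ℤ) := (zpow_zero _).symm
          _ < (p : ℝ) ^ (-(c0.valuation - y.valuation)) := zpow_lt_zpow_right₀ hp1 (by omega)
      rw [← h3] at this
      linarith
    exact ⟨(c0.valuation - y.valuation).toNat, by rw [h3, Int.toNat_of_nonneg h4]⟩
  -- the integrand
  set f : ℚ_[p] → ℂ := fun x => h x * ψ (x * y) with hfdef
  have hhcont : Continuous h := by
    have hc1 : Continuous fun x : ℚ_[p] => (‖x‖ ^ (lam - 1) : ℝ) := by
      rw [continuous_iff_continuousAt]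
      intro x
      exact (Real.continuousAt_rpow_const ‖x‖ (lam - 1) (Or.inr (by linarith))).comp
        continuous_norm.continuousAt
    have hfe : h = fun x => ((‖x‖ ^ (lam - 1) : ℝ) : ℂ) * φ x := funext hh
    rw [hfe]
    exact (Complex.continuous_ofReal.comp hc1).mul hφcont
  have hfcont : Continuous f := hhcont.mul (hψc.comp (continuous_id.mul continuous_const))
  have hsuppf : Function.support f ⊆ Ω := by
    intro x hx
    refine hΩs ?_
    intro h0
    apply hx
    simp [hfdef, hh x, h0]
  have hfcs : HasCompactSupport f :=
    IsCompact.of_isClosed_subset hΩc isClosed_closure (closure_minimal hsuppf hΩc.isClosed)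
  have hfint : Integrable f μ := hfcont.integrable_of_hasCompactSupport hfcs
  -- norms are constant on small balls away from 0
  have norm_eq_of_mem : ∀ a x : ℚ_[p], r < ‖a‖ → ‖x - a‖ ≤ r → ‖x‖ = ‖a‖ := by
    intro a x ha hxa
    have hne : ‖x - a‖ ≠ ‖a‖ := ne_of_lt (lt_of_le_of_lt hxa ha)
    have hx' : x = (x - a) + a := by ring
    rw [hx', Padic.add_eq_max_of_ne hne]
    exact max_eq_right (le_of_lt (lt_of_le_of_lt hxa ha))
  -- key vanishing on balls away from 0
  have key : ∀ a : ℚ_[p], r < ‖a‖ → ∫ x in closedBall a r, f x ∂μ = 0 := by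
    intro a ha
    have hEq : Set.EqOn f (fun x => h a * ψ (x * y)) (closedBall a r) := by
      intro x hx
      rw [mem_closedBall, dist_eq_norm] at hx
      have hnorm : ‖x‖ = ‖a‖ := norm_eq_of_mem a x ha hx
      have hφeq : φ x = φ a := by
        have := hδ a (x - a) (hx.trans hrδ)
        simpa using this
      simp only [hfdef, hh x, hh a, hnorm, hφeq]
    rw [setIntegral_congr_fun measurableSet_closedBall hEq, integral_const_mul]
    have hJ : ∫ x in closedBall a r, (ψ (x * y) : ℂ) ∂μ = 0 := by
      set c : ℚ_[p] := c0 * y⁻¹ with hcdef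
      have hcy : c * y = c0 := by
        rw [hcdef]
        field_simp
      have hcnorm : ‖c‖ = r := by
        rw [hcdef, norm_mul, norm_inv, hrdef]
        rw [div_eq_mul_inv]
      have hmemiff : ∀ x : ℚ_[p], c + x ∈ closedBall a r ↔ x ∈ closedBall a r := by
        intro x
        simp only [mem_closedBall, dist_eq_norm]
        constructor
        · intro hx
          have hre : x - a = (c + x - a) + (-c) := by ring
          rw [hre]
          refine le_trans (Padic.nonarchimedean _ _) (max_le hx ?_)
          rw [norm_neg, hcnorm]
        · intro hx
          have hre : c + x - a = (x - a) + c := by ring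
          rw [hre]
          exact le_trans (Padic.nonarchimedean _ _) (max_le hx (le_of_eq hcnorm))
      set F : ℚ_[p] → ℂ := (closedBall a r).indicator (fun x => (ψ (x * y) : ℂ)) with hFdef
      have h1 : ∫ x in closedBall a r, (ψ (x * y) : ℂ) ∂μ = ∫ x, F x ∂μ :=
        (integral_indicator measurableSet_closedBall).symm
      have h2 : ∫ x, F x ∂μ = ∫ x, F (c + x) ∂μ := (integral_add_left_eq_self F c).symm
      have h3 : ∀ x, F (c + x) = ψ c0 * F x := by
        intro x
        by_cases hx : x ∈ closedBall a r
        · rw [hFdef]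
          simp only [Set.indicator_of_mem ((hmemiff x).2 hx), Set.indicator_of_mem hx]
          rw [add_mul, AddChar.map_add_eq_mul, hcy]
        · rw [hFdef]
          simp only [Set.indicator_of_notMem (fun hc' => hx ((hmemiff x).1 hc')),
            Set.indicator_of_notMem hx, mul_zero]
      have h4 : ∫ x, F x ∂μ = ψ c0 * ∫ x, F x ∂μ := by
        conv_lhs => rw [h2]
        simp_rw [h3]
        rw [integral_const_mul]
      have h5 : (ψ c0 - 1) * ∫ x, F x ∂μ = 0 := by
        rw [sub_mul, one_mul, ← h4, sub_self]
      rcases mul_eq_zero.mp h5 with h6 | h6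
      · exact absurd (sub_eq_zero.mp h6) hc0
      · rw [h1, h6]
    rw [hJ, mul_zero]
  -- decomposition of the integral
  have hB_sub : closedBall (0 : ℚ_[p]) r ⊆ closedBall 0 T :=
    closedBall_subset_closedBall (hr1.trans (le_max_right _ _))
  set A : Set ℚ_[p] := closedBall (0 : ℚ_[p]) T \ closedBall 0 r with hAdef
  have hBopen : IsOpen (closedBall (0 : ℚ_[p]) r) :=
    IsUltrametricDist.isOpen_closedBall _ (ne_of_gt hrpos)
  have hAcompact : IsCompact A := (isCompact_closedBall _ _).diff hBopen
  have hAnorm : ∀ a ∈ A, r < ‖a‖ := by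
    intro a ha
    have := ha.2
    simp only [mem_closedBall, dist_zero_right, not_le] at this
    exact this
  have hball_sub : ∀ a ∈ A, closedBall a r ⊆ A := by
    intro a ha x hx
    rw [mem_closedBall, dist_eq_norm] at hx
    have hnorm : ‖x‖ = ‖a‖ := norm_eq_of_mem a x (hAnorm a ha) hx
    constructor
    · rw [mem_closedBall, dist_zero_right, hnorm]
      have := ha.1
      rwa [mem_closedBall, dist_zero_right] at this
    · intro hmem
      rw [mem_closedBall, dist_zero_right, hnorm] at hmem
      exact absurd hmem (not_le.mpr (hAnorm a ha))
  have hcover : A ⊆ ⋃ a : A, closedBall (a : ℚ_[p]) r := fun x hx =>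
    Set.mem_iUnion.2 ⟨⟨x, hx⟩, mem_closedBall_self hrpos.le⟩
  obtain ⟨t, ht⟩ := hAcompact.elim_finite_subcover (fun a : A => closedBall (a : ℚ_[p]) r)
    (fun a => IsUltrametricDist.isOpen_closedBall _ (ne_of_gt hrpos)) hcover
  set 𝔅 : Finset (Set ℚ_[p]) := t.image (fun a : A => closedBall (a : ℚ_[p]) r) with h𝔅def
  have hctr : ∀ B ∈ 𝔅, ∃ a : ℚ_[p], a ∈ A ∧ B = closedBall a r := by
    intro B hB
    rw [h𝔅def, Finset.mem_image] at hB
    obtain ⟨a, hat, heq⟩ := hB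
    exact ⟨(a : ℚ_[p]), a.2, heq.symm⟩
  have hA_eq : A = ⋃ B ∈ 𝔅, B := by
    apply Set.Subset.antisymm
    · intro x hx
      have h1 := ht hx
      rw [Set.mem_iUnion₂] at h1
      obtain ⟨a, hat, hxa⟩ := h1
      rw [Set.mem_iUnion₂]
      refine ⟨closedBall (a : ℚ_[p]) r, ?_, hxa⟩
      rw [h𝔅def, Finset.mem_image]
      exact ⟨a, hat, rfl⟩
    · intro x hx
      rw [Set.mem_iUnion₂] at hx
      obtain ⟨B, hB, hxB⟩ := hx
      obtain ⟨a, haA, rfl⟩ := hctr B hB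
      exact hball_sub a haA hxB
  have hmeasB : ∀ B ∈ 𝔅, MeasurableSet B := by
    intro B hB
    obtain ⟨a, _, rfl⟩ := hctr B hB
    exact measurableSet_closedBall
  have hdisjB : (↑𝔅 : Set (Set ℚ_[p])).Pairwise (Function.onFun Disjoint fun B : Set ℚ_[p] => B) := by
    intro B1 h1 B2 h2 hne
    obtain ⟨a, _, rfl⟩ := hctr B1 (Finset.mem_coe.mp h1)
    obtain ⟨b, _, rfl⟩ := hctr B2 (Finset.mem_coe.mp h2)
    rcases IsUltrametricDist.closedBall_eq_or_disjoint a b r with heq | hd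
    · exact absurd heq hne
    · exact hd
  have hintB : ∀ B ∈ 𝔅, IntegrableOn f B μ := fun B _ => hfint.integrableOn
  have hintA : ∫ x in A, f x ∂μ = 0 := by
    rw [hA_eq, integral_biUnion_finset 𝔅 hmeasB hdisjB hintB]
    refine Finset.sum_eq_zero fun B hB => ?_
    obtain ⟨a, haA, rfl⟩ := hctr B hB
    exact key a (hAnorm a haA)
  have hsplit : ∫ x, f x ∂μ = ∫ x in closedBall (0 : ℚ_[p]) r, f x ∂μ := by
    have h0 : ∫ x in closedBall (0 : ℚ_[p]) T, f x ∂μ = ∫ x, f x ∂μ := by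
      refine setIntegral_eq_integral_of_forall_compl_eq_zero fun x hx => ?_
      have hφx : φ x = 0 := by
        by_contra hφx
        exact hx (hΩT (hΩs hφx))
      simp [hfdef, hh x, hφx]
    have hunion : closedBall (0 : ℚ_[p]) T = closedBall (0 : ℚ_[p]) r ∪ A :=
      (Set.union_diff_cancel hB_sub).symm
    rw [← h0, hunion, setIntegral_union disjoint_sdiff_self_right
      ((measurableSet_closedBall.diff measurableSet_closedBall))
      hfint.integrableOn hfint.integrableOn, hintA, add_zero]
  -- measure of the small ball
  have hmeas : (μ (closedBall (0 : ℚ_[p]) r)).toReal = r * M0 := by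
    have hsc := padic_meas_ball (p := p) μ n
    have htr : (μ (closedBall (0 : ℚ_[p]) ((p : ℝ) ^ (-(n : ℤ))))).toReal * (p : ℝ) ^ n
        = M0 := by
      have h' := congrArg ENNReal.toReal hsc
      rw [ENNReal.toReal_mul] at h'
      simpa using h'
    have hppow : (0 : ℝ) < (p : ℝ) ^ n := by positivity
    rw [hrn, ← htr]
    have : (p : ℝ) ^ (-(n : ℤ)) = ((p : ℝ) ^ n)⁻¹ := by
      rw [zpow_neg, zpow_natCast]
    rw [this]
    field_simp
  -- final bound
  have hbound : ∀ x ∈ closedBall (0 : ℚ_[p]) r, ‖f x‖ ≤ Mφ * Mψ * r ^ (lam - 1) := by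
    intro x hx
    rw [mem_closedBall, dist_zero_right] at hx
    have hxy : x * y ∈ closedBall (0 : ℚ_[p]) ‖c0‖ := by
      rw [mem_closedBall, dist_zero_right, norm_mul, ← hrymul]
      exact mul_le_mul_of_nonneg_right hx hy0.le
    have hnormf : ‖f x‖ = ‖x‖ ^ (lam - 1) * (‖φ x‖ * ‖ψ (x * y)‖) := by
      rw [hfdef]
      simp only [hh x, norm_mul, Complex.norm_real, Real.norm_eq_abs]
      rw [abs_of_nonneg (Real.rpow_nonneg (norm_nonneg _) _)]
      ring
    rw [hnormf]
    calc ‖x‖ ^ (lam - 1) * (‖φ x‖ * ‖ψ (x * y)‖)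
        ≤ r ^ (lam - 1) * (Mφ * Mψ) := by
          refine mul_le_mul (Real.rpow_le_rpow (norm_nonneg _) hx (by linarith))
            (mul_le_mul (hMφ x) (hMψ _ hxy) (norm_nonneg _) hMφ0) (by positivity)
            (by positivity)
      _ = Mφ * Mψ * r ^ (lam - 1) := by ring
  have hμfin : μ (closedBall (0 : ℚ_[p]) r) < ⊤ :=
    lt_of_le_of_lt (measure_mono (closedBall_subset_closedBall hr1))
      (isCompact_closedBall _ _).measure_lt_top
  have hrlam : r ^ (lam - 1) * r = r ^ lam := by
    nth_rewrite 2 [← Real.rpow_one r]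
    rw [← Real.rpow_add hrpos]
    norm_num
  have hfinal : r ^ lam = ‖c0‖ ^ lam * ‖y‖ ^ (-lam) := by
    rw [hrdef, Real.div_rpow (norm_nonneg _) (norm_nonneg _), Real.rpow_neg (norm_nonneg _)]
    rw [div_eq_mul_inv]
  calc ‖∫ x : ℚ_[p], h x * ψ (x * y) ∂μ‖
      = ‖∫ x in closedBall (0 : ℚ_[p]) r, f x ∂μ‖ := by rw [← hsplit]
    _ ≤ Mφ * Mψ * r ^ (lam - 1) * (μ (closedBall (0 : ℚ_[p]) r)).toReal :=
        norm_setIntegral_le_of_norm_le_const hμfin hbound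
    _ = Mφ * Mψ * M0 * (r ^ (lam - 1) * r) := by rw [hmeas]; ring
    _ = Mφ * Mψ * M0 * r ^ lam := by rw [hrlam]
    _ = Mφ * Mψ * M0 * ‖c0‖ ^ lam * ‖y‖ ^ (-lam) := by rw [hfinal]; ring
end

section
/- Let F : ℝ → ℂ be a Schwartz function and define z(F, s) = ∫_ℝ F(x)|x|^{s} dx for Re(s) > -1. Then s ↦ z(F, s) extends to a meromorphic function on ℂ, holomorphic on Re(s) > -1, with at most simple poles at s = -1, -3, -5, …; at s = -1 the residue is 2F(0). -/
open MeasureTheory Filter Set Complex ContDiff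

namespace ZetaAux

noncomputable def tc (f : ℝ → ℂ) (n : ℕ) : ℂ := iteratedDeriv n f 0 / n.factorial

noncomputable def TP (f : ℝ → ℂ) (N : ℕ) (x : ℝ) : ℂ :=
  ∑ n ∈ Finset.range N, tc f n * (x : ℂ) ^ n

lemma TP_zero (f : ℝ → ℂ) (N : ℕ) : TP f (N + 1) 0 = f 0 := by
  rw [TP, Finset.sum_range_succ']
  simp [tc]

lemma hasDerivAt_TP (f : ℝ → ℂ) (N : ℕ) (x : ℝ) :
    HasDerivAt (fun y : ℝ => TP f (N + 1) y) (TP (deriv f) N x) x := by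
  have key : ∀ y : ℝ, TP f (N+1) y = tc f 0 + ∑ m ∈ Finset.range N, tc f (m+1) * (y:ℂ)^(m+1) := by
    intro y
    rw [TP, Finset.sum_range_succ']
    simp [add_comm]
  have key2 : TP (deriv f) N x = ∑ m ∈ Finset.range N, tc f (m+1) * ((m+1) * (x:ℂ)^m) := by
    rw [TP]
    refine Finset.sum_congr rfl fun m _ => ?_
    have h1 : tc (deriv f) m = (m+1) * tc f (m+1) := by
      have hm : ((m.factorial : ℂ)) ≠ 0 := Nat.cast_ne_zero.mpr m.factorial_ne_zero
      have hm1 : ((m : ℂ) + 1) ≠ 0 := by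
        exact Nat.cast_add_one_ne_zero m
      rw [tc, tc, ← iteratedDeriv_succ', Nat.factorial_succ]
      push_cast
      field_simp
    rw [h1]; ring
  rw [funext key, key2]
  refine HasDerivAt.const_add _ (HasDerivAt.fun_sum fun m _ => ?_)
  have h : HasDerivAt (fun y : ℝ => ((y:ℂ))^(m+1)) ((m+1) * (x:ℂ)^m) x := by
    have := (hasDerivAt_pow (m+1) (x:ℂ)).comp_ofReal
    simpa using this
  simpa [mul_assoc] using h.const_mul (tc f (m+1))

lemma abs_le_of_uIcc {x t : ℝ} (ht : t ∈ Set.uIcc 0 x) : |t| ≤ |x| := by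
  rcases le_total 0 x with h | h
  · rw [Set.uIcc_of_le h] at ht
    rw [_root_.abs_of_nonneg ht.1, _root_.abs_of_nonneg h]; exact ht.2
  · rw [Set.uIcc_of_ge h] at ht
    rw [abs_of_nonpos ht.2, abs_of_nonpos h]; exact neg_le_neg ht.1

lemma taylor_bound (N : ℕ) (f : ℝ → ℂ) (hf : ContDiff ℝ ∞ f) :
    ∃ C : ℝ, 0 ≤ C ∧ ∀ x ∈ Set.Icc (-1:ℝ) 1, ‖f x - TP f N x‖ ≤ C * |x| ^ N := by
  induction N generalizing f with
  | zero =>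
    obtain ⟨C, hC⟩ := isCompact_Icc.exists_bound_of_continuousOn
      (hf.continuous.continuousOn (s := Set.Icc (-1:ℝ) 1))
    refine ⟨max C 0, le_max_right _ _, fun x hx => ?_⟩
    simp only [TP, Finset.sum_range_zero, sub_zero, pow_zero, mul_one]
    exact (hC x hx).trans (le_max_left _ _)
  | succ N ih =>
    obtain ⟨C, hC0, hC⟩ := ih (deriv f) ((contDiff_infty_iff_deriv.mp hf).2)
    refine ⟨C, hC0, fun x hx => ?_⟩
    have h01 : (0:ℝ) ∈ Set.uIcc (-1:ℝ) 1 := by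
      rw [Set.uIcc_of_le (by norm_num : (-1:ℝ) ≤ 1)]; norm_num
    have hx1 : x ∈ Set.uIcc (-1:ℝ) 1 := by
      rw [Set.uIcc_of_le (by norm_num : (-1:ℝ) ≤ 1)]; exact hx
    have hsub : Set.uIcc (0:ℝ) x ⊆ Set.Icc (-1:ℝ) 1 := by
      rw [← Set.uIcc_of_le (by norm_num : (-1:ℝ) ≤ 1)]
      exact Set.uIcc_subset_uIcc h01 hx1
    have key : ∀ t ∈ Set.uIcc (0:ℝ) x,
        HasDerivWithinAt (fun y : ℝ => f y - TP f (N+1) y)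
          (deriv f t - TP (deriv f) N t) (Set.uIcc (0:ℝ) x) t := fun t _ =>
      (((hf.differentiable (by simp) t).hasDerivAt).sub (hasDerivAt_TP f N t)).hasDerivWithinAt
    have bdd : ∀ t ∈ Set.uIcc (0:ℝ) x, ‖deriv f t - TP (deriv f) N t‖ ≤ C * |x| ^ N := by
      intro t ht
      refine (hC t (hsub ht)).trans ?_
      exact mul_le_mul_of_nonneg_left (pow_le_pow_left₀ (abs_nonneg _) (abs_le_of_uIcc ht) N) hC0
    have := (convex_uIcc (0:ℝ) x).norm_image_sub_le_of_norm_hasDerivWithin_le key bdd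
      Set.left_mem_uIcc Set.right_mem_uIcc
    rw [TP_zero, sub_self, sub_zero, sub_zero, Real.norm_eq_abs] at this
    calc ‖f x - TP f (N+1) x‖ ≤ C * |x| ^ N * |x| := this
    _ = C * |x| ^ (N+1) := by rw [pow_succ]; ring

noncomputable def HH (f : ℝ → ℂ) (N : ℕ) (x : ℝ) : ℂ :=
  f x - Set.indicator (Set.Icc (-1 : ℝ) 1) (TP f N) x

noncomputable def SS (f : ℝ → ℂ) (N : ℕ) (s : ℂ) : ℂ :=
  ∑ n ∈ Finset.range N, tc f n * (if Even n then 2 / (s + n + 1) else 0)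

noncomputable def II (f : ℝ → ℂ) (N : ℕ) (s : ℂ) : ℂ :=
  ∫ x : ℝ, HH f N x * ((|x| : ℝ) : ℂ) ^ s

noncomputable def ZN (f : ℝ → ℂ) (N : ℕ) (s : ℂ) : ℂ := II f N s + SS f N s

lemma continuous_TP (f : ℝ → ℂ) (N : ℕ) : Continuous (TP f N) :=
  continuous_finset_sum _ fun n _ => continuous_const.mul (Complex.continuous_ofReal.pow n)

lemma hh_meas (F : SchwartzMap ℝ ℂ) (N : ℕ) : Measurable (HH (⇑F) N) :=
  F.continuous.measurable.sub (Measurable.indicator (continuous_TP F N).measurable measurableSet_Icc)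

lemma kern_meas (s : ℂ) : Measurable fun x : ℝ => ((|x| : ℝ) : ℂ) ^ s :=
  ((Complex.continuous_ofReal.comp _root_.continuous_abs).measurable).pow measurable_const

lemma hh_eq_off (F : ℝ → ℂ) (N : ℕ) {x : ℝ} (hx : x ∉ Set.Icc (-1:ℝ) 1) : HH F N x = F x := by
  rw [HH, Set.indicator_of_notMem hx, sub_zero]

lemma hh_bound (F : SchwartzMap ℝ ℂ) (N : ℕ) :
    ∃ C : ℝ, 0 ≤ C ∧ ∀ x ∈ Set.Icc (-1:ℝ) 1, ‖HH (⇑F) N x‖ ≤ C * |x| ^ N := by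
  obtain ⟨C, hC0, hC⟩ := taylor_bound N (⇑F) (F.smooth ⊤)
  exact ⟨C, hC0, fun x hx => by rw [HH, Set.indicator_of_mem hx]; exact hC x hx⟩

/-- an even function integrable on a set is integrable on its reflection -/
lemma integrableOn_neg {f : ℝ → ℝ} (hf : ∀ x, f (-x) = f x) {s : Set ℝ}
    (h : IntegrableOn f s) : IntegrableOn f ((fun x : ℝ => -x) ⁻¹' s) := by
  have := ((Measure.measurePreserving_neg (volume : Measure ℝ)).integrableOn_comp_preimage
      (Homeomorph.neg ℝ).measurableEmbedding).mpr h
  have he : (f ∘ fun x : ℝ => -x) = f := funext fun x => hf x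
  simpa [he] using this

lemma integrableOn_abs_rpow_Icc {p : ℝ} (hp : -1 < p) :
    IntegrableOn (fun x : ℝ => |x| ^ p) (Set.Icc (-1:ℝ) 1) := by
  have h1 : IntegrableOn (fun x : ℝ => |x| ^ p) (Set.Ioc (0:ℝ) 1) := by
    refine ((intervalIntegral.intervalIntegrable_rpow' hp (a := 0) (b := 1)).1).congr_fun
      (fun x hx => ?_) measurableSet_Ioc
    rw [_root_.abs_of_nonneg (le_of_lt hx.1)]
  have h2 : IntegrableOn (fun x : ℝ => |x| ^ p) (Set.Ioc (-1:ℝ) 0) := by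
    have h3 : IntegrableOn (fun x : ℝ => |x| ^ p) (Set.Ico (0:ℝ) 1) := by
      rw [← Set.Ioo_union_left one_pos]
      exact (h1.mono_set Set.Ioo_subset_Ioc_self).union
        (by simp : IntegrableOn (fun x : ℝ => |x| ^ p) {0} volume)
    have := integrableOn_neg (f := fun x : ℝ => |x| ^ p) (fun x => by simp [abs_neg]) h3
    have hpre : ((fun x : ℝ => -x) ⁻¹' Set.Ico (0:ℝ) 1) = Set.Ioc (-1:ℝ) 0 := by
      ext x; simp only [Set.mem_preimage, Set.mem_Ico, Set.mem_Ioc]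
      constructor <;> intro h <;> constructor <;> linarith [h.1, h.2]
    rwa [hpre] at this
  rw [integrableOn_Icc_iff_integrableOn_Ioc,
    ← Set.Ioc_union_Ioc_eq_Ioc (by norm_num : (-1:ℝ) ≤ 0) (by norm_num : (0:ℝ) ≤ 1)]
  exact h2.union h1

lemma ae_ne_zero : ∀ᵐ x : ℝ, x ≠ 0 := by
  refine ae_iff.mpr ?_
  simpa using measure_singleton (0:ℝ)

lemma master (F : SchwartzMap ℝ ℂ) (N : ℕ) {r : ℝ} (hr : -((N:ℝ)+1) < r) :
    Integrable (fun x : ℝ => ‖HH (⇑F) N x‖ * |x| ^ r) := by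
  have hmeas : Measurable fun x : ℝ => ‖HH (⇑F) N x‖ * |x| ^ r :=
    (hh_meas F N).norm.mul (_root_.continuous_abs.measurable.pow measurable_const)
  rw [← integrableOn_univ, ← Set.union_compl_self (Set.Icc (-1:ℝ) 1), integrableOn_union]
  constructor
  · obtain ⟨C, hC0, hC⟩ := hh_bound F N
    refine Integrable.mono' ((integrableOn_abs_rpow_Icc (p := (N:ℝ) + r) (by linarith)).const_mul C)
      hmeas.aestronglyMeasurable.restrict ?_
    filter_upwards [ae_restrict_mem measurableSet_Icc, ae_restrict_of_ae ae_ne_zero]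
      with x hx hx0
    have hxpos : (0:ℝ) < |x| := abs_pos.mpr hx0
    have hnn : (0:ℝ) ≤ |x| ^ r := Real.rpow_nonneg (abs_nonneg x) r
    calc ‖‖HH (⇑F) N x‖ * |x| ^ r‖ = ‖HH (⇑F) N x‖ * |x| ^ r := by
          rw [Real.norm_eq_abs, _root_.abs_of_nonneg (mul_nonneg (norm_nonneg _) hnn)]
      _ ≤ (C * |x| ^ N) * |x| ^ r := mul_le_mul_of_nonneg_right (hC x hx) hnn
      _ = C * |x| ^ ((N:ℝ) + r) := by
          rw [← Real.rpow_natCast |x| N, mul_assoc, ← Real.rpow_add hxpos]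
  · set k : ℕ := ⌈r⌉₊ + 2 with hk
    obtain ⟨C, hC0, hC⟩ := F.decay k 0
    have hIoi : IntegrableOn (fun x : ℝ => |x| ^ (-2:ℝ)) (Set.Ioi (1:ℝ)) := by
      refine (integrableOn_Ioi_rpow_of_lt (by norm_num : (-2:ℝ) < -1) one_pos).congr_fun
        (fun x hx => ?_) measurableSet_Ioi
      rw [_root_.abs_of_nonneg (le_of_lt (lt_trans one_pos hx))]
    have hIio : IntegrableOn (fun x : ℝ => |x| ^ (-2:ℝ)) (Set.Iio (-1:ℝ)) := by
      have := integrableOn_neg (f := fun x : ℝ => |x| ^ (-2:ℝ)) (fun x => by simp) hIoi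
      have hpre : ((fun x : ℝ => -x) ⁻¹' Set.Ioi (1:ℝ)) = Set.Iio (-1:ℝ) := by
        ext x; simp only [Set.mem_preimage, Set.mem_Ioi, Set.mem_Iio]; constructor <;> intro h <;> linarith
      rwa [hpre] at this
    have hg : IntegrableOn (fun x : ℝ => C * |x| ^ (-2:ℝ)) (Set.Icc (-1:ℝ) 1)ᶜ := by
      have hcompl : (Set.Icc (-1:ℝ) 1)ᶜ = Set.Iio (-1:ℝ) ∪ Set.Ioi 1 := by
        ext x
        simp only [Set.mem_compl_iff, Set.mem_Icc, Set.mem_union, Set.mem_Iio, Set.mem_Ioi,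
          not_and_or, not_le]
      rw [hcompl]
      exact (hIio.union hIoi).const_mul C
    refine Integrable.mono' hg hmeas.aestronglyMeasurable.restrict ?_
    filter_upwards [ae_restrict_mem measurableSet_Icc.compl] with x hx
    have hx1 : 1 < |x| := lt_of_not_ge (fun h => hx (abs_le.mp h))
    have hxpos : (0:ℝ) < |x| := lt_trans one_pos hx1
    have hF : ‖(F : ℝ → ℂ) x‖ ≤ C / |x| ^ (k:ℝ) := by
      rw [le_div_iff₀ (Real.rpow_pos_of_pos hxpos _), Real.rpow_natCast]
      have := hC x
      rwa [norm_iteratedFDeriv_zero, Real.norm_eq_abs, mul_comm] at this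
    have hHH : HH (⇑F) N x = F x := hh_eq_off (⇑F) N hx
    have hnn : (0:ℝ) ≤ |x| ^ r := Real.rpow_nonneg (abs_nonneg x) r
    calc ‖‖HH (⇑F) N x‖ * |x| ^ r‖ = ‖(F : ℝ → ℂ) x‖ * |x| ^ r := by
          rw [Real.norm_eq_abs, _root_.abs_of_nonneg (mul_nonneg (norm_nonneg _) hnn), hHH]
      _ ≤ (C / |x| ^ (k:ℝ)) * |x| ^ r := mul_le_mul_of_nonneg_right hF hnn
      _ = C * |x| ^ (r - (k:ℝ)) := by
          rw [Real.rpow_sub hxpos]; ring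
      _ ≤ C * |x| ^ (-2:ℝ) := by
          refine mul_le_mul_of_nonneg_left
            (Real.rpow_le_rpow_of_exponent_le hx1.le ?_) hC0.le
          have : r ≤ (⌈r⌉₊ : ℝ) := Nat.le_ceil r
          have hkr : (k:ℝ) = (⌈r⌉₊ : ℝ) + 2 := by rw [hk]; push_cast; ring
          linarith
    
lemma integrable_HH_kern (F : SchwartzMap ℝ ℂ) (N : ℕ) {s : ℂ} (hs : -((N:ℝ)+1) < s.re) :
    Integrable (fun x : ℝ => HH (⇑F) N x * ((|x| : ℝ) : ℂ) ^ s) := by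
  refine (master F N hs).mono' (((hh_meas F N).mul (kern_meas s)).aestronglyMeasurable) ?_
  filter_upwards [ae_ne_zero] with x hx0
  rw [norm_mul,
    Complex.norm_cpow_eq_rpow_re_of_pos (abs_pos.mpr hx0)]

lemma rpow_between {b : ℝ} (hb : 0 < b) {p p1 p2 : ℝ} (h1 : p1 ≤ p) (h2 : p ≤ p2) :
    b ^ p ≤ b ^ p1 + b ^ p2 := by
  rcases le_total b 1 with h | h
  · have := Real.rpow_le_rpow_of_exponent_ge hb h h1
    linarith [Real.rpow_nonneg hb.le p2]
  · have := Real.rpow_le_rpow_of_exponent_le h h2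
    linarith [Real.rpow_nonneg hb.le p1]

lemma abs_log_le {b ε : ℝ} (hb : 0 < b) (hε : 0 < ε) :
    |Real.log b| ≤ ε⁻¹ * (b ^ (-ε) + b ^ ε) := by
  have hinv0 : (0:ℝ) ≤ ε⁻¹ := (inv_pos.mpr hε).le
  rcases le_total 1 b with h | h
  · rw [_root_.abs_of_nonneg (Real.log_nonneg h)]
    have h1 := Real.log_le_rpow_div hb.le hε
    have h2 : (0:ℝ) ≤ b ^ (-ε) := Real.rpow_nonneg hb.le _
    rw [div_eq_inv_mul] at h1
    nlinarith
  · rw [abs_of_nonpos (Real.log_nonpos hb.le h)]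
    have hinv : (0:ℝ) < b⁻¹ := inv_pos.mpr hb
    have h1 := Real.log_le_rpow_div hinv.le hε
    rw [Real.log_inv, Real.inv_rpow hb.le, ← Real.rpow_neg hb.le, div_eq_inv_mul] at h1
    have h2 : (0:ℝ) ≤ b ^ ε := Real.rpow_nonneg hb.le _
    nlinarith

lemma hasDerivAt_II (F : SchwartzMap ℝ ℂ) (N : ℕ) {s : ℂ} (hs : -((N:ℝ)+1) < s.re) :
    HasDerivAt (II (⇑F) N)
      (∫ x : ℝ, HH (⇑F) N x * (((|x| : ℝ) : ℂ) ^ s * ((Real.log |x| : ℝ) : ℂ))) s := by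
  set ε : ℝ := (s.re + ((N:ℝ)+1)) / 4 with hεdef
  have hε0 : 0 < ε := by rw [hεdef]; linarith
  set bound : ℝ → ℝ := fun a => ε⁻¹ * ((‖HH (⇑F) N a‖ * |a| ^ (s.re - 2*ε)
      + ‖HH (⇑F) N a‖ * |a| ^ s.re)
      + (‖HH (⇑F) N a‖ * |a| ^ s.re + ‖HH (⇑F) N a‖ * |a| ^ (s.re + 2*ε))) with hbd
  have key := hasDerivAt_integral_of_dominated_loc_of_deriv_le (μ := volume) (𝕜 := ℂ)
    (F := fun (t : ℂ) (a : ℝ) => HH (⇑F) N a * ((|a| : ℝ) : ℂ) ^ t)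
    (F' := fun (t : ℂ) (a : ℝ) => HH (⇑F) N a * (((|a| : ℝ) : ℂ) ^ t * ((Real.log |a| : ℝ) : ℂ)))
    (x₀ := s) (bound := bound) (Metric.ball_mem_nhds s hε0)
    (Eventually.of_forall fun t => ((hh_meas F N).mul (kern_meas t)).aestronglyMeasurable)
    (integrable_HH_kern F N hs)
    (((hh_meas F N).mul ((kern_meas s).mul (Complex.measurable_ofReal.comp
      (Real.measurable_log.comp _root_.continuous_abs.measurable)))).aestronglyMeasurable)
    ?_ ?_ ?_
  case _ => exact key.2
  · -- bound
    filter_upwards [ae_ne_zero] with a ha0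
    intro t ht
    have hb : (0:ℝ) < |a| := abs_pos.mpr ha0
    have htre : |t.re - s.re| < ε := by
      have h1 : |(t - s).re| ≤ ‖t - s‖ := Complex.abs_re_le_norm _
      have h2 : ‖t - s‖ < ε := by
        rw [← Complex.dist_eq]; exact Metric.mem_ball.mp ht
      simpa [Complex.sub_re] using lt_of_le_of_lt h1 h2
    obtain ⟨hlt1, hlt2⟩ := abs_sub_lt_iff.mp htre
    have hnorm : ‖HH (⇑F) N a * (((|a| : ℝ) : ℂ) ^ t * ((Real.log |a| : ℝ) : ℂ))‖
        = ‖HH (⇑F) N a‖ * (|a| ^ t.re * |Real.log (_root_.abs a)|) := by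
      rw [norm_mul, norm_mul,
        Complex.norm_cpow_eq_rpow_re_of_pos hb, Complex.norm_real, Real.norm_eq_abs]
    rw [hnorm]
    have h1 : |a| ^ t.re ≤ |a| ^ (s.re - ε) + |a| ^ (s.re + ε) :=
      rpow_between hb (by linarith) (by linarith)
    have h2 : |Real.log (_root_.abs a)| ≤ ε⁻¹ * (|a| ^ (-ε) + |a| ^ ε) := abs_log_le hb hε0
    have hmain : |a| ^ t.re * |Real.log (_root_.abs a)|
        ≤ (|a| ^ (s.re - ε) + |a| ^ (s.re + ε)) * (ε⁻¹ * (|a| ^ (-ε) + |a| ^ ε)) := by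
      refine mul_le_mul h1 h2 (abs_nonneg _) ?_
      positivity
    have hexp : (|a| ^ (s.re - ε) + |a| ^ (s.re + ε)) * (ε⁻¹ * (|a| ^ (-ε) + |a| ^ ε))
        = ε⁻¹ * ((|a| ^ (s.re - 2*ε) + |a| ^ s.re) + (|a| ^ s.re + |a| ^ (s.re + 2*ε))) := by
      have e1 : |a| ^ (s.re - ε) * |a| ^ (-ε) = |a| ^ (s.re - 2*ε) := by
        rw [← Real.rpow_add hb]; ring_nf
      have e2 : |a| ^ (s.re - ε) * |a| ^ ε = |a| ^ s.re := by
        rw [← Real.rpow_add hb]; ring_nf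
      have e3 : |a| ^ (s.re + ε) * |a| ^ (-ε) = |a| ^ s.re := by
        rw [← Real.rpow_add hb]; ring_nf
      have e4 : |a| ^ (s.re + ε) * |a| ^ ε = |a| ^ (s.re + 2*ε) := by
        rw [← Real.rpow_add hb]; ring_nf
      calc (|a| ^ (s.re - ε) + |a| ^ (s.re + ε)) * (ε⁻¹ * (|a| ^ (-ε) + |a| ^ ε))
          = ε⁻¹ * ((|a| ^ (s.re - ε) * |a| ^ (-ε) + |a| ^ (s.re - ε) * |a| ^ ε)
            + (|a| ^ (s.re + ε) * |a| ^ (-ε) + |a| ^ (s.re + ε) * |a| ^ ε)) := by ring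
        _ = ε⁻¹ * ((|a| ^ (s.re - 2*ε) + |a| ^ s.re) + (|a| ^ s.re + |a| ^ (s.re + 2*ε))) := by
            rw [e1, e2, e3, e4]
    calc ‖HH (⇑F) N a‖ * (|a| ^ t.re * |Real.log (_root_.abs a)|)
        ≤ ‖HH (⇑F) N a‖ * ((|a| ^ (s.re - ε) + |a| ^ (s.re + ε))
            * (ε⁻¹ * (|a| ^ (-ε) + |a| ^ ε))) :=
          mul_le_mul_of_nonneg_left hmain (norm_nonneg _)
      _ = bound a := by rw [hexp, hbd]; ring
  · -- bound integrable
    rw [hbd]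
    have i1 : Integrable (fun a : ℝ => ‖HH (⇑F) N a‖ * |a| ^ (s.re - 2*ε)) :=
      master F N (by rw [hεdef]; linarith)
    have i2 : Integrable (fun a : ℝ => ‖HH (⇑F) N a‖ * |a| ^ s.re) := master F N hs
    have i3 : Integrable (fun a : ℝ => ‖HH (⇑F) N a‖ * |a| ^ (s.re + 2*ε)) :=
      master F N (by rw [hεdef]; linarith)
    exact ((i1.add i2).add (i2.add i3)).const_mul ε⁻¹
  · -- differentiability
    filter_upwards [ae_ne_zero] with a ha0
    intro t _
    have hb0 : ((|a| : ℝ) : ℂ) ≠ 0 := by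
      exact_mod_cast (abs_pos.mpr ha0).ne'
    have h := (hasDerivAt_id t).const_cpow (c := ((|a| : ℝ) : ℂ)) (Or.inl hb0)
    have hlog : Complex.log ((|a| : ℝ) : ℂ) = ((Real.log |a| : ℝ) : ℂ) :=
      (Complex.ofReal_log (abs_nonneg a)).symm
    have h2 := h.const_mul (HH (⇑F) N a)
    simp only [id_eq, mul_one, hlog] at h2
    exact h2

lemma analyticAt_II (F : SchwartzMap ℝ ℂ) (N : ℕ) {s : ℂ} (hs : -((N:ℝ)+1) < s.re) :
    AnalyticAt ℂ (II (⇑F) N) s := by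
  have hopen : IsOpen {z : ℂ | -((N:ℝ)+1) < z.re} :=
    isOpen_lt continuous_const Complex.continuous_re
  exact DifferentiableOn.analyticAt (s := {z : ℂ | -((N:ℝ)+1) < z.re})
    (fun z hz => ((hasDerivAt_II F N hz).differentiableAt).differentiableWithinAt)
    (hopen.mem_nhds hs)

lemma analyticAt_SSgen (f : ℝ → ℂ) (T : Finset ℕ) {s : ℂ}
    (h : ∀ n ∈ T, Even n → s + n + 1 ≠ 0) :
    AnalyticAt ℂ (fun z : ℂ => ∑ n ∈ T, tc f n * (if Even n then 2 / (z + (n:ℂ) + 1) else 0)) s := by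
  refine T.analyticAt_fun_sum fun n hn => ?_
  by_cases he : Even n
  · simp only [he, if_true]
    refine analyticAt_const.mul (analyticAt_const.div ?_ (h n hn he))
    exact (analyticAt_id.add analyticAt_const).add analyticAt_const
  · simp only [he, if_false, mul_zero]
    exact analyticAt_const

lemma analyticAt_ZN (F : SchwartzMap ℝ ℂ) (N : ℕ) {s : ℂ} (hs : -((N:ℝ)+1) < s.re)
    (h : ∀ n ∈ Finset.range N, Even n → s + n + 1 ≠ 0) :
    AnalyticAt ℂ (ZN (⇑F) N) s := by
  unfold ZN SS
  exact (analyticAt_II F N hs).add (analyticAt_SSgen (⇑F) (Finset.range N) h)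

lemma integrableOn_pow_kern (n : ℕ) {s : ℂ} (hs : -((n:ℝ)+1) < s.re) :
    IntegrableOn (fun x : ℝ => (x:ℂ)^n * ((|x| : ℝ) : ℂ) ^ s) (Set.Icc (-1:ℝ) 1) := by
  refine Integrable.mono' (integrableOn_abs_rpow_Icc (p := (n:ℝ) + s.re) (by linarith))
    ((((Complex.continuous_ofReal.pow n).measurable).mul
      (kern_meas s)).aestronglyMeasurable.restrict) ?_
  filter_upwards [ae_restrict_mem measurableSet_Icc, ae_restrict_of_ae ae_ne_zero] with x hx hx0
  have hxpos : (0:ℝ) < |x| := abs_pos.mpr hx0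
  rw [norm_mul, Complex.norm_cpow_eq_rpow_re_of_pos hxpos]
  have h1 : ‖((x:ℂ))^n‖ = |x|^(n:ℝ) := by
    rw [norm_pow, Complex.norm_real, Real.norm_eq_abs, ← Real.rpow_natCast]
  rw [h1, ← Real.rpow_add hxpos]

lemma integral_Icc_pow_kern (n : ℕ) {s : ℂ} (hs : -((n:ℝ)+1) < s.re) :
    ∫ x in Set.Icc (-1:ℝ) 1, (x:ℂ)^n * ((|x| : ℝ) : ℂ) ^ s
      = (if Even n then 2 / (s + n + 1) else 0) := by
  have hint := integrableOn_pow_kern n hs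
  have hne : (n:ℂ) + s + 1 ≠ 0 := by
    intro h
    have := congrArg Complex.re h
    simp only [Complex.add_re, Complex.natCast_re, Complex.one_re, Complex.zero_re] at this
    linarith
  have h1 : ∫ x in (0:ℝ)..1, (x:ℂ)^n * ((|x| : ℝ) : ℂ) ^ s = 1 / ((n:ℂ) + s + 1) := by
    have hcongr : ∀ᵐ x : ℝ, x ∈ Set.uIoc (0:ℝ) 1 →
        (x:ℂ)^n * ((|x| : ℝ) : ℂ) ^ s = (x:ℂ) ^ ((n:ℂ) + s) := by
      refine Eventually.of_forall fun x hx => ?_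
      rw [Set.uIoc_of_le (by norm_num : (0:ℝ) ≤ 1)] at hx
      have hx0 : (0:ℝ) < x := hx.1
      rw [_root_.abs_of_nonneg hx0.le, ← Complex.cpow_natCast,
        ← Complex.cpow_add _ _ (by exact_mod_cast hx0.ne')]
    rw [intervalIntegral.integral_congr_ae hcongr,
      _root_.integral_cpow (Or.inl (by
        rw [Complex.add_re, Complex.natCast_re]; linarith))]
    rw [Complex.ofReal_one, Complex.ofReal_zero, Complex.one_cpow, Complex.zero_cpow hne,
      sub_zero]
  have h2 : ∫ x in (-1:ℝ)..0, (x:ℂ)^n * ((|x| : ℝ) : ℂ) ^ s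
      = (-1:ℂ)^n * (1 / ((n:ℂ) + s + 1)) := by
    have hcn := intervalIntegral.integral_comp_neg (a := (0:ℝ)) (b := 1)
      (fun x : ℝ => (x:ℂ)^n * ((|x| : ℝ) : ℂ) ^ s)
    have heq : ∀ x : ℝ, (((-x : ℝ)):ℂ)^n * ((|(-x)| : ℝ) : ℂ) ^ s
        = (-1:ℂ)^n * ((x:ℂ)^n * ((|x| : ℝ) : ℂ) ^ s) := by
      intro x
      rw [abs_neg, Complex.ofReal_neg, neg_pow]
      ring
    simp only [neg_zero] at hcn
    rw [funext heq] at hcn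
    rw [intervalIntegral.integral_const_mul, h1] at hcn
    rw [← hcn]
  have hi1 : IntervalIntegrable (fun x : ℝ => (x:ℂ)^n * ((|x| : ℝ) : ℂ) ^ s) volume (-1) 0 := by
    rw [intervalIntegrable_iff, Set.uIoc_of_le (by norm_num : (-1:ℝ) ≤ 0)]
    exact hint.mono_set (fun x hx => ⟨hx.1.le, by linarith [hx.2]⟩)
  have hi2 : IntervalIntegrable (fun x : ℝ => (x:ℂ)^n * ((|x| : ℝ) : ℂ) ^ s) volume 0 1 := by
    rw [intervalIntegrable_iff, Set.uIoc_of_le (by norm_num : (0:ℝ) ≤ 1)]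
    exact hint.mono_set (fun x hx => ⟨by linarith [hx.1], hx.2⟩)
  have hsplit := intervalIntegral.integral_add_adjacent_intervals hi1 hi2
  rw [MeasureTheory.integral_Icc_eq_integral_Ioc,
    ← intervalIntegral.integral_of_le (by norm_num : (-1:ℝ) ≤ 1), ← hsplit, h1, h2]
  rcases Nat.even_or_odd n with he | ho
  · rw [if_pos he, he.neg_one_pow]
    rw [show (n:ℂ) + s + 1 = s + n + 1 by ring]
    ring
  · rw [if_neg (Nat.not_even_iff_odd.mpr ho), ho.neg_one_pow]
    ring

lemma integral_indicator_pow (n : ℕ) {s : ℂ} (hs : -((n:ℝ)+1) < s.re) :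
    ∫ x : ℝ, Set.indicator (Set.Icc (-1:ℝ) 1) (fun y : ℝ => (y:ℂ)^n) x * ((|x| : ℝ) : ℂ) ^ s
      = (if Even n then 2 / (s + n + 1) else 0) := by
  have hfn : (fun x : ℝ => Set.indicator (Set.Icc (-1:ℝ) 1) (fun y : ℝ => (y:ℂ)^n) x
      * ((|x| : ℝ) : ℂ) ^ s)
      = Set.indicator (Set.Icc (-1:ℝ) 1) (fun y : ℝ => (y:ℂ)^n * ((|y| : ℝ) : ℂ) ^ s) :=
    funext fun x => (Set.indicator_mul_left (i := x) (Set.Icc (-1:ℝ) 1) (fun y : ℝ => (y:ℂ)^n) (fun y : ℝ => ((|y| : ℝ) : ℂ) ^ s)).symm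
  rw [hfn, MeasureTheory.integral_indicator measurableSet_Icc, integral_Icc_pow_kern n hs]

lemma integral_indicator_pow' (n : ℕ) {s : ℂ} (hs : -((n:ℝ)+1) < s.re) :
    ∫ x : ℝ, Set.indicator (Set.Icc (-1:ℝ) 1) (fun y : ℝ => (y:ℂ)^n * ((|y| : ℝ) : ℂ) ^ s) x
      = (if Even n then 2 / (s + n + 1) else 0) := by
  rw [MeasureTheory.integral_indicator measurableSet_Icc, integral_Icc_pow_kern n hs]

lemma ZN_succ (F : SchwartzMap ℝ ℂ) (N : ℕ) {s : ℂ} (hs : -((N:ℝ)+1) < s.re) :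
    ZN (⇑F) N s = ZN (⇑F) (N+1) s := by
  have h2 : Integrable (fun x : ℝ => HH (⇑F) (N+1) x * ((|x| : ℝ) : ℂ) ^ s) :=
    integrable_HH_kern F (N+1) (by push_cast; linarith)
  have hind : Integrable (fun x : ℝ => tc (⇑F) N *
      Set.indicator (Set.Icc (-1:ℝ) 1) (fun y : ℝ => (y:ℂ)^N * ((|y| : ℝ) : ℂ) ^ s) x) :=
    ((integrableOn_pow_kern N hs).integrable_indicator measurableSet_Icc).const_mul _
  have hpt : (fun x : ℝ => HH (⇑F) N x * ((|x| : ℝ) : ℂ) ^ s)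
      = fun x => HH (⇑F) (N+1) x * ((|x| : ℝ) : ℂ) ^ s
        + tc (⇑F) N *
          Set.indicator (Set.Icc (-1:ℝ) 1) (fun y : ℝ => (y:ℂ)^N * ((|y| : ℝ) : ℂ) ^ s) x := by
    funext x
    by_cases hx : x ∈ Set.Icc (-1:ℝ) 1
    · simp only [HH, TP, Set.indicator_of_mem hx, Finset.sum_range_succ]
      ring
    · simp only [HH, Set.indicator_of_notMem hx]
      ring
  have key : II (⇑F) N s = II (⇑F) (N+1) s
      + tc (⇑F) N * (if Even N then 2 / (s + N + 1) else 0) := by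
    rw [II, II, hpt, integral_add h2 hind, MeasureTheory.integral_const_mul,
      integral_indicator_pow' N hs]
  rw [ZN, ZN, key, SS, SS, Finset.sum_range_succ]
  ring

lemma ZN_agree (F : SchwartzMap ℝ ℂ) {N M : ℕ} (h : N ≤ M) {s : ℂ}
    (hs : -((N:ℝ)+1) < s.re) : ZN (⇑F) N s = ZN (⇑F) M s := by
  induction M with
  | zero => rw [Nat.le_zero.mp h]
  | succ M ih =>
    rcases Nat.lt_or_ge N (M+1) with hlt | hge
    · have hNM : N ≤ M := Nat.lt_succ_iff.mp hlt
      have hNMr : ((N:ℝ)) ≤ M := Nat.cast_le.mpr hNM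
      rw [ih hNM]
      exact ZN_succ F M (by linarith)
    · rw [le_antisymm h hge]

noncomputable def ZZ (F : SchwartzMap ℝ ℂ) (s : ℂ) : ℂ := ZN (⇑F) ⌈-s.re⌉₊ s

lemma ceil_lt (s : ℂ) : -((⌈-s.re⌉₊ : ℝ) + 1) < s.re := by
  have := Nat.le_ceil (-s.re)
  linarith

lemma ZZ_eq (F : SchwartzMap ℝ ℂ) {s : ℂ} {M : ℕ} (h : ⌈-s.re⌉₊ ≤ M) :
    ZZ F s = ZN (⇑F) M s := ZN_agree F h (ceil_lt s)

lemma ZZ_eq_integral (F : SchwartzMap ℝ ℂ) {s : ℂ} (hs : -1 < s.re) :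
    ZZ F s = ∫ x : ℝ, F x * ((|x| : ℝ) : ℂ) ^ s := by
  have h0 : -(((0:ℕ)):ℝ) - 1 < s.re := by push_cast; linarith
  have h0' : -(((0:ℕ)):ℝ)-1 = -((((0:ℕ)):ℝ)+1) := by ring
  rw [ZZ, ← ZN_agree F (Nat.zero_le _) (by rw [← h0']; exact h0)]
  rw [ZN, SS, II]
  have hTP : TP (⇑F) 0 = fun _ : ℝ => (0:ℂ) := funext fun y => by simp [TP]
  simp [HH, hTP]

lemma integrable_F_kern (F : SchwartzMap ℝ ℂ) {s : ℂ} (hs : -1 < s.re) :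
    Integrable (fun x : ℝ => F x * ((|x| : ℝ) : ℂ) ^ s) := by
  refine (integrable_HH_kern F 0 (by push_cast; linarith)).congr
    (Eventually.of_forall fun x => ?_)
  have hTP : TP (⇑F) 0 = fun _ : ℝ => (0:ℂ) := funext fun y => by simp [TP]
  simp [HH, hTP]

lemma ZZ_analytic (F : SchwartzMap ℝ ℂ) {s : ℂ} (hs : ∀ k : ℕ, s ≠ -(2 * (k:ℂ) + 1)) :
    AnalyticAt ℂ (ZZ F) s := by
  set M : ℕ := ⌈-s.re⌉₊ + 1 with hM
  have hev : ZZ F =ᶠ[nhds s] ZN (⇑F) M := by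
    have hopen : IsOpen {u : ℂ | s.re - 1 < u.re} :=
      isOpen_lt continuous_const Complex.continuous_re
    have hmem : s ∈ {u : ℂ | s.re - 1 < u.re} := by
      simp only [Set.mem_setOf_eq]; linarith
    filter_upwards [hopen.mem_nhds hmem] with u hu
    refine ZZ_eq F ?_
    rw [Nat.ceil_le]
    have h1 : -s.re ≤ (⌈-s.re⌉₊:ℝ) := Nat.le_ceil _
    have h2 : s.re - 1 < u.re := hu
    push_cast [hM]
    linarith
  refine AnalyticAt.congr ?_ hev.symm
  refine analyticAt_ZN F M ?_ ?_
  · have h1 := ceil_lt s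
    push_cast [hM]
    linarith
  · intro n hn he h0
    obtain ⟨j, hj⟩ := he
    apply hs j
    have h1 : s = -((n:ℂ) + 1) := by linear_combination h0
    rw [h1, hj]
    push_cast
    ring

lemma residue (F : SchwartzMap ℝ ℂ) (k : ℕ) :
    Tendsto (fun s : ℂ => (s + (2 * (k:ℂ) + 1)) * ZZ F s)
      (nhdsWithin (-(2 * (k:ℂ) + 1)) {(-(2 * (k:ℂ) + 1))}ᶜ)
      (nhds (2 * tc (⇑F) (2*k))) := by
  set s₀ : ℂ := -(2 * (k:ℂ) + 1) with hs₀
  set M : ℕ := 2*k + 2 with hM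
  have hs₀re : s₀.re = -(2*(k:ℝ)+1) := by
    rw [hs₀]
    simp [Complex.add_re, Complex.mul_re]
  have hsM : -((M:ℝ)+1) < s₀.re := by
    rw [hs₀re, hM]; push_cast; linarith
  set G : ℂ → ℂ := fun s => II (⇑F) M s
      + ∑ n ∈ (Finset.range M).erase (2*k), tc (⇑F) n * (if Even n then 2/(s + (n:ℂ) + 1) else 0)
    with hG
  have hGcont : ContinuousAt G s₀ := by
    refine ((analyticAt_II F M hsM).continuousAt).add ?_
    refine (analyticAt_SSgen (⇑F) ((Finset.range M).erase (2*k)) (s := s₀) ?_).continuousAt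
    intro n hn _ hzero
    have hne : n ≠ 2*k := Finset.ne_of_mem_erase hn
    apply hne
    rw [hs₀] at hzero
    have : (n:ℂ) = 2*(k:ℂ) := by linear_combination hzero
    exact_mod_cast this
  have hdecomp : ∀ s : ℂ, ZN (⇑F) M s = G s + tc (⇑F) (2*k) * (2/(s + ((2*k:ℕ):ℂ) + 1)) := by
    intro s
    have h2k : (2*k) ∈ Finset.range M := Finset.mem_range.mpr (by omega)
    rw [ZN, SS, ← Finset.add_sum_erase _ _ h2k, if_pos (even_two_mul k), hG]
    ring
  have hlim : Tendsto (fun s : ℂ => (s - s₀) * G s + 2 * tc (⇑F) (2*k))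
      (nhdsWithin s₀ {s₀}ᶜ) (nhds (2 * tc (⇑F) (2*k))) := by
    have h1 : Tendsto (fun s : ℂ => (s - s₀) * G s + 2 * tc (⇑F) (2*k)) (nhds s₀)
        (nhds ((s₀ - s₀) * G s₀ + 2 * tc (⇑F) (2*k))) :=
      (((continuousAt_id.sub continuousAt_const).mul hGcont).add continuousAt_const)
    rw [sub_self, zero_mul, zero_add] at h1
    exact h1.mono_left nhdsWithin_le_nhds
  refine Tendsto.congr' ?_ hlim
  have hball : Metric.ball s₀ 1 ∈ nhdsWithin s₀ {s₀}ᶜ :=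
    nhdsWithin_le_nhds (Metric.ball_mem_nhds s₀ one_pos)
  filter_upwards [hball, self_mem_nhdsWithin] with s hs hne
  have hd : ‖s - s₀‖ < 1 := by
    rw [← Complex.dist_eq]; exact Metric.mem_ball.mp hs
  have hre : |s.re - s₀.re| ≤ ‖s - s₀‖ := by
    simpa [Complex.sub_re] using Complex.abs_re_le_norm (s - s₀)
  have hsre : s₀.re - 1 < s.re := by
    have := abs_sub_lt_iff.mp (lt_of_le_of_lt hre hd)
    linarith [this.2]
  have hZZ : ZZ F s = ZN (⇑F) M s := by
    refine ZZ_eq F ?_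
    rw [Nat.ceil_le]
    rw [hs₀re] at hsre
    push_cast [hM]
    linarith
  have hne0 : s - s₀ ≠ 0 := sub_ne_zero.mpr (by simpa using hne)
  have hsub : s + ((2*k:ℕ):ℂ) + 1 = s - s₀ := by
    rw [hs₀]; push_cast; ring
  have hfac : s + (2 * (k:ℂ) + 1) = s - s₀ := by rw [hs₀]; ring
  rw [hZZ, hdecomp s, hfac, hsub]
  field_simp

end ZetaAux

open ZetaAux in
/-- for a Schwartz function `F : ℝ → ℂ`, `z(F,s) = ∫_ℝ F(x)|x|^s dx`
(convergent for `Re s > -1`) extends meromorphically to `ℂ`, analytic away from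
`s = -1, -3, -5, …`, with at most simple poles there; at `s = -1` the residue is `2·F(0)`. -/
theorem zeta_integral_meromorphic (F : SchwartzMap ℝ ℂ) :
    ∃ Z : ℂ → ℂ,
      (∀ s : ℂ, -1 < s.re →
        Integrable (fun x : ℝ => F x * (((|x| : ℝ) : ℂ) ^ s)) ∧
        Z s = ∫ x : ℝ, F x * (((|x| : ℝ) : ℂ) ^ s)) ∧
      (∀ s : ℂ, (∀ k : ℕ, s ≠ -(2 * (k : ℂ) + 1)) → AnalyticAt ℂ Z s) ∧
      (∀ k : ℕ, ∃ r : ℂ,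
        Tendsto (fun s : ℂ => (s + (2 * (k : ℂ) + 1)) * Z s)
          (nhdsWithin (-(2 * (k : ℂ) + 1)) {(-(2 * (k : ℂ) + 1))}ᶜ) (nhds r)) ∧
      Tendsto (fun s : ℂ => (s + 1) * Z s)
        (nhdsWithin (-1) {(-1 : ℂ)}ᶜ) (nhds (2 * F 0)) := by
  refine ⟨ZZ F, fun s hs => ⟨integrable_F_kern F hs, ZZ_eq_integral F hs⟩,
    fun s hs => ZZ_analytic F hs, fun k => ⟨_, residue F k⟩, ?_⟩
  have h := residue F 0
  have h2 : tc (⇑F) (2*0) = F 0 := by simp [tc]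
  rw [h2] at h
  simpa using h
end
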